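/- Let j, s, d, t be positive integers with s > dt, let F be a field, and let C ⊆ F^{js} be a linear code of length js and dimension j(s − dt). Let L : [js] → [s] be a surjective labeling such that every nonzero codeword of C has labelweight at least dt + 1, and let G ∈ F^{j(s−dt) × js} be any generator matrix for C. Then for every subset Λ ⊆ [s] with |Λ| = s − dt, the set of column indices {i ∈ [js] : L(i) ∈ Λ} has cardinality exactly j(s − dt), and the corresponding columns of G are linearly independent; equivalently, the square submatrix G(Λ) of G consisting of these columns is nonsingular. -/

import Mathlib

open Classical in
/-- The labelweight of a vector `c` with respect to a labeling `L`: the number of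
distinct labels appearing on the support of `c`. -/
noncomputable def labelWeight {ι F : Type*} [Fintype ι] {s : ℕ} [Zero F]
    (L : ι → Fin s) (c : ι → F) : ℕ :=
  ((Finset.univ.filter fun i => c i ≠ 0).image L).card

/-- Let j, s, d, t be positive integers with s > dt, C ⊆ F^{js} a linear
code of dimension j(s − dt), L : [js] → [s] a surjective labeling such that every
nonzero codeword has labelweight at least dt + 1, and G a generator matrix of C.
Then for every Λ ⊆ [s] with |Λ| = s − dt, the set of column indices with label in Λ
has cardinality j(s − dt) and the corresponding columns of G are linearly
independent. -/
theorem stmt_4 {F : Type*} [Field F] {j s d t : ℕ}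
    (hj : 0 < j) (hs : 0 < s) (hd : 0 < d) (ht : 0 < t) (hst : d * t < s)
    (C : Submodule F (Fin (j * s) → F))
    (hdim : Module.finrank F C = j * (s - d * t))
    (L : Fin (j * s) → Fin s) (hL : Function.Surjective L)
    (hwt : ∀ c ∈ C, c ≠ 0 → d * t + 1 ≤ labelWeight L c)
    (G : Matrix (Fin (j * (s - d * t))) (Fin (j * s)) F)
    (hG : Submodule.span F (Set.range fun i => G i) = C) :
    ∀ Λ : Finset (Fin s), Λ.card = s - d * t →
      (Finset.univ.filter fun i : Fin (j * s) => L i ∈ Λ).card = j * (s - d * t) ∧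
      LinearIndependent F
        (fun i : {x : Fin (j * s) // L x ∈ Λ} => fun r => G r i.1) := by
  have hk : 0 < s - d * t := by omega
  -- Key A: a codeword vanishing on all coordinates with label in Λ is zero.
  have keyA : ∀ (Λ : Finset (Fin s)), Λ.card = s - d * t →
      ∀ c ∈ C, (∀ i : Fin (j * s), L i ∈ Λ → c i = 0) → c = 0 := by
    intro Λ hΛ c hc h0
    by_contra hne
    have h1 := hwt c hc hne
    have h2 : labelWeight L c ≤ d * t := by
      unfold labelWeight
      refine le_trans (Finset.card_le_card (t := Finset.univ \ Λ) ?_) ?_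
      · intro a ha
        simp only [Finset.mem_image, Finset.mem_filter] at ha
        obtain ⟨i, ⟨-, hi⟩, rfl⟩ := ha
        simp only [Finset.mem_sdiff, Finset.mem_univ, true_and]
        exact fun hmem => hi (h0 i hmem)
      · rw [Finset.card_sdiff_of_subset (Finset.subset_univ _), Finset.card_univ, Fintype.card_fin, hΛ]
        omega
    omega
  -- Key B: lower bound on the number of coordinates with label in Λ.
  have keyB : ∀ (Λ : Finset (Fin s)), Λ.card = s - d * t →
      j * (s - d * t) ≤ (Finset.univ.filter fun i : Fin (j * s) => L i ∈ Λ).card := by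
    intro Λ hΛ
    set π : (Fin (j * s) → F) →ₗ[F] ({x : Fin (j * s) // L x ∈ Λ} → F) :=
      LinearMap.funLeft F F Subtype.val with hπ
    have hinj : Function.Injective (π.comp C.subtype) := by
      rw [← LinearMap.ker_eq_bot, Submodule.eq_bot_iff]
      rintro ⟨c, hc⟩ hker
      rw [LinearMap.mem_ker] at hker
      have hc0 : c = 0 := by
        refine keyA Λ hΛ c hc fun i hi => ?_
        exact congrFun hker ⟨i, hi⟩
      exact Subtype.ext hc0
    have hle := LinearMap.finrank_le_finrank_of_injective hinj
    rw [hdim] at hle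
    calc j * (s - d * t) ≤ Module.finrank F ({x : Fin (j * s) // L x ∈ Λ} → F) := hle
      _ = Fintype.card {x : Fin (j * s) // L x ∈ Λ} := Module.finrank_fintype_fun_eq_card F
      _ = (Finset.univ.filter fun i : Fin (j * s) => L i ∈ Λ).card := Fintype.card_subtype _
  -- number of k-subsets containing a fixed element
  have hcount : ∀ a : Fin s,
      ((Finset.powersetCard (s - d * t) (Finset.univ : Finset (Fin s))).filter
        (fun Λ => a ∈ Λ)).card = Nat.choose (s - 1) (s - d * t - 1) := by
    intro a
    have h1 : ((Finset.powersetCard (s - d * t) (Finset.univ : Finset (Fin s))).filter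
        (fun Λ => ¬ a ∈ Λ)) = Finset.powersetCard (s - d * t) (Finset.univ.erase a) := by
      ext Λ
      simp only [Finset.mem_filter, Finset.mem_powersetCard, Finset.subset_erase,
        Finset.subset_univ, true_and]
      tauto
    have h2 := Finset.card_filter_add_card_filter_not
      (s := Finset.powersetCard (s - d * t) (Finset.univ : Finset (Fin s)))
      (p := fun Λ => a ∈ Λ)
    rw [h1, Finset.card_powersetCard, Finset.card_powersetCard,
      Finset.card_erase_of_mem (Finset.mem_univ a), Finset.card_univ, Fintype.card_fin] at h2
    have pascal : Nat.choose s (s - d * t) =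
        Nat.choose (s - 1) (s - d * t - 1) + Nat.choose (s - 1) (s - d * t) := by
      have e1 : (s - 1).succ = s := by omega
      have e2 : (s - d * t - 1).succ = s - d * t := by omega
      have := Nat.choose_succ_succ (s - 1) (s - d * t - 1)
      rwa [e1, e2] at this
    omega
  -- double counting sum
  have hsum : ∑ Λ ∈ Finset.powersetCard (s - d * t) (Finset.univ : Finset (Fin s)),
      (Finset.univ.filter fun i : Fin (j * s) => L i ∈ Λ).card
      = (j * s) * Nat.choose (s - 1) (s - d * t - 1) := by
    have hcf : ∀ Λ : Finset (Fin s),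
        (Finset.univ.filter fun i : Fin (j * s) => L i ∈ Λ).card
        = ∑ i : Fin (j * s), if L i ∈ Λ then 1 else 0 := fun Λ => Finset.card_filter _ _
    calc ∑ Λ ∈ Finset.powersetCard (s - d * t) (Finset.univ : Finset (Fin s)),
          (Finset.univ.filter fun i : Fin (j * s) => L i ∈ Λ).card
        = ∑ Λ ∈ Finset.powersetCard (s - d * t) (Finset.univ : Finset (Fin s)),
            ∑ i : Fin (j * s), if L i ∈ Λ then 1 else 0 := by
          exact Finset.sum_congr rfl fun Λ _ => hcf Λ
      _ = ∑ i : Fin (j * s), ∑ Λ ∈ Finset.powersetCard (s - d * t)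
            (Finset.univ : Finset (Fin s)), if L i ∈ Λ then 1 else 0 := Finset.sum_comm
      _ = ∑ i : Fin (j * s), Nat.choose (s - 1) (s - d * t - 1) := by
          refine Finset.sum_congr rfl fun i _ => ?_
          rw [← Finset.card_filter]
          exact hcount (L i)
      _ = (j * s) * Nat.choose (s - 1) (s - d * t - 1) := by
          rw [Finset.sum_const, Finset.card_univ, Fintype.card_fin, smul_eq_mul]
  have hid : Nat.choose s (s - d * t) * (j * (s - d * t))
      = (j * s) * Nat.choose (s - 1) (s - d * t - 1) := by
    have e1 : (s - 1).succ = s := by omega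
    have e2 : (s - d * t - 1).succ = s - d * t := by omega
    have h : (s - 1).succ * Nat.choose (s - 1) (s - d * t - 1) = Nat.choose (s - 1).succ (s - d * t - 1).succ * (s - d * t - 1).succ := Nat.add_one_mul_choose_eq (s - 1) (s - d * t - 1)
    rw [e1, e2] at h
    calc Nat.choose s (s - d * t) * (j * (s - d * t))
        = j * (Nat.choose s (s - d * t) * (s - d * t)) := by ring
      _ = j * (s * Nat.choose (s - 1) (s - d * t - 1)) := by rw [h]
      _ = (j * s) * Nat.choose (s - 1) (s - d * t - 1) := by ring
  -- equality of cardinalities for every Λ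
  have keyC : ∀ (Λ : Finset (Fin s)), Λ.card = s - d * t →
      (Finset.univ.filter fun i : Fin (j * s) => L i ∈ Λ).card = j * (s - d * t) := by
    intro Λ hΛ
    have hmem : Λ ∈ Finset.powersetCard (s - d * t) (Finset.univ : Finset (Fin s)) :=
      Finset.mem_powersetCard.mpr ⟨Finset.subset_univ _, hΛ⟩
    by_contra hne
    have hlt : j * (s - d * t) < (Finset.univ.filter fun i : Fin (j * s) => L i ∈ Λ).card :=
      lt_of_le_of_ne (keyB Λ hΛ) (Ne.symm hne)
    have hstrict : ∑ Λ' ∈ Finset.powersetCard (s - d * t) (Finset.univ : Finset (Fin s)),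
        (j * (s - d * t))
        < ∑ Λ' ∈ Finset.powersetCard (s - d * t) (Finset.univ : Finset (Fin s)),
            (Finset.univ.filter fun i : Fin (j * s) => L i ∈ Λ').card := by
      refine Finset.sum_lt_sum (fun Λ' hΛ' => keyB Λ' (Finset.mem_powersetCard.mp hΛ').2)
        ⟨Λ, hmem, hlt⟩
    rw [Finset.sum_const, smul_eq_mul, Finset.card_powersetCard, Finset.card_univ,
      Fintype.card_fin, hsum] at hstrict
    omega
  intro Λ hΛ
  have hcardEq := keyC Λ hΛ
  refine ⟨hcardEq, ?_⟩
  -- the rows of G are linearly independent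
  have hrowsG : LinearIndependent F (fun r : Fin (j * (s - d * t)) => G r) := by
    rw [linearIndependent_iff_card_eq_finrank_span, Set.finrank, hG, hdim, Fintype.card_fin]
  set π : (Fin (j * s) → F) →ₗ[F] ({x : Fin (j * s) // L x ∈ Λ} → F) :=
    LinearMap.funLeft F F Subtype.val with hπ
  have hdisj : Disjoint (Submodule.span F (Set.range fun r : Fin (j * (s - d * t)) => G r))
      (LinearMap.ker π) := by
    rw [hG, Submodule.disjoint_def]
    intro c hcC hcker
    rw [LinearMap.mem_ker] at hcker
    exact keyA Λ hΛ c hcC fun i hi => congrFun hcker ⟨i, hi⟩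
  have hrowsM : LinearIndependent F (π ∘ fun r : Fin (j * (s - d * t)) => G r) :=
    hrowsG.map hdisj
  have hcards : Fintype.card {x : Fin (j * s) // L x ∈ Λ} = j * (s - d * t) := by
    rw [Fintype.card_subtype]; exact hcardEq
  set e : {x : Fin (j * s) // L x ∈ Λ} ≃ Fin (j * (s - d * t)) :=
    Fintype.equivFinOfCardEq hcards with he
  set M' : Matrix (Fin (j * (s - d * t))) (Fin (j * (s - d * t))) F :=
    fun r r' => G r (e.symm r').1 with hM'
  have hM'rows : LinearIndependent F (fun r => M' r) := by
    have h2 := hrowsM.map' (LinearEquiv.funCongrLeft F F e.symm).toLinearMap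
      (LinearEquiv.ker _)
    exact h2
  have hU : IsUnit M' := Matrix.linearIndependent_rows_iff_isUnit.mp hM'rows
  have hcols : LinearIndependent F (fun r' => M'.transpose r') :=
    Matrix.linearIndependent_cols_iff_isUnit.mpr hU
  have hcomp := hcols.comp e e.injective
  have hfe : (fun i : {x : Fin (j * s) // L x ∈ Λ} => fun r => G r i.1)
      = fun i => M'.transpose (e i) := by
    funext i
    funext r
    simp [hM', Matrix.transpose]
  rw [hfe]
  exact hcomp
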